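/- arXiv:1312.5960 — 3 statements merged into one kernel-verified Lean document; each statement's English description precedes it below -/
import Mathlib

section
/- Let 0 < α < κ, λ > 0, s > 0, and let f : ℝ² → ℂ be in the homogeneous Sobolev space Ḣ^{α/2} with e^{λ s^{α/κ} Λ^α} f ∈ Ḣ^{κ/2}, where Λ = (−Δ)^{1/2}. Then e^{λ s^{α/κ} Λ^α} f ∈ Ḣ^{α/2} and ‖e^{λ s^{α/κ}Λ^α} f‖²_{Ḣ^{α/2}} ≤ e ‖f‖²_{Ḣ^{α/2}} + (2λ)^{κ/α − 1} s^{1 − α/κ} ‖e^{λ s^{α/κ}Λ^α} f‖²_{Ḣ^{κ/2}}. -/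
open MeasureTheory FourierTransform

lemma exp_le_aux {x m : ℝ} (hx : 0 ≤ x) (hm : 0 < m) :
    Real.exp x ≤ Real.exp 1 + x ^ m * Real.exp x := by
  rcases le_or_gt x 1 with h | h
  · have h1 : Real.exp x ≤ Real.exp 1 := Real.exp_le_exp.2 h
    nlinarith [Real.rpow_nonneg hx m, Real.exp_pos x]
  · have h1 : (1:ℝ) ≤ x ^ m := Real.one_le_rpow h.le (by linarith)
    nlinarith [Real.exp_pos x, Real.exp_pos 1]

theorem gevrey_interpolation (α κ lam s : ℝ) (hα : 0 < α) (hακ : α < κ)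
    (hlam : 0 < lam) (hs : 0 < s) (f : EuclideanSpace ℝ (Fin 2) → ℂ)
    (h1 : Integrable (fun ξ : EuclideanSpace ℝ (Fin 2) => ‖ξ‖ ^ α * ‖𝓕 f ξ‖ ^ 2))
    (h2 : Integrable (fun ξ : EuclideanSpace ℝ (Fin 2) =>
      ‖ξ‖ ^ κ * Real.exp (2 * lam * s ^ (α / κ) * ‖ξ‖ ^ α) * ‖𝓕 f ξ‖ ^ 2)) :
    Integrable (fun ξ : EuclideanSpace ℝ (Fin 2) =>
        ‖ξ‖ ^ α * Real.exp (2 * lam * s ^ (α / κ) * ‖ξ‖ ^ α) * ‖𝓕 f ξ‖ ^ 2) ∧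
    (∫ ξ : EuclideanSpace ℝ (Fin 2),
        ‖ξ‖ ^ α * Real.exp (2 * lam * s ^ (α / κ) * ‖ξ‖ ^ α) * ‖𝓕 f ξ‖ ^ 2) ≤
      Real.exp 1 * (∫ ξ : EuclideanSpace ℝ (Fin 2), ‖ξ‖ ^ α * ‖𝓕 f ξ‖ ^ 2) +
        (2 * lam) ^ (κ / α - 1) * s ^ (1 - α / κ) *
          (∫ ξ : EuclideanSpace ℝ (Fin 2),
            ‖ξ‖ ^ κ * Real.exp (2 * lam * s ^ (α / κ) * ‖ξ‖ ^ α) * ‖𝓕 f ξ‖ ^ 2) := by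
  set c : ℝ := 2 * lam * s ^ (α / κ) with hc
  set m : ℝ := κ / α - 1 with hmdef
  have hκ : 0 < κ := hα.trans hακ
  have hm : 0 < m := by
    have : 1 < κ / α := (one_lt_div hα).2 hακ
    simp only [hmdef]; linarith
  have hcpos : 0 < c := by positivity
  have he1 : α / κ * m = 1 - α / κ := by
    rw [hmdef]; field_simp
  have he2 : α * m = κ - α := by
    rw [hmdef]; field_simp
  have hCeq : c ^ m = (2 * lam) ^ m * s ^ (1 - α / κ) := by
    rw [hc, Real.mul_rpow (by positivity) (by positivity), ← Real.rpow_mul hs.le, he1]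
  set C : ℝ := (2 * lam) ^ m * s ^ (1 - α / κ) with hCdef
  have hCnn : 0 ≤ C := by positivity
  have key : ∀ ξ : EuclideanSpace ℝ (Fin 2),
      ‖ξ‖ ^ α * Real.exp (c * ‖ξ‖ ^ α) * ‖𝓕 f ξ‖ ^ 2 ≤
      Real.exp 1 * (‖ξ‖ ^ α * ‖𝓕 f ξ‖ ^ 2) +
      C * (‖ξ‖ ^ κ * Real.exp (c * ‖ξ‖ ^ α) * ‖𝓕 f ξ‖ ^ 2) := by
    intro ξ
    set t : ℝ := ‖ξ‖ with ht
    have htnn : 0 ≤ t := norm_nonneg _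
    rcases eq_or_lt_of_le htnn with h0 | h0
    · rw [← h0, Real.zero_rpow hα.ne', Real.zero_rpow hκ.ne']
      simp [Real.exp_nonneg]
    · have hx : 0 ≤ c * t ^ α := by positivity
      have hexp := exp_le_aux hx hm
      have hpow : (c * t ^ α) ^ m = C * t ^ (κ - α) := by
        rw [Real.mul_rpow hcpos.le (by positivity), ← Real.rpow_mul htnn, he2, hCeq]
      have htκ : t ^ α * t ^ (κ - α) = t ^ κ := by
        rw [← Real.rpow_add h0]; ring_nf
      have hnn : 0 ≤ t ^ α * ‖𝓕 f ξ‖ ^ 2 := by positivity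
      calc t ^ α * Real.exp (c * t ^ α) * ‖𝓕 f ξ‖ ^ 2
          = Real.exp (c * t ^ α) * (t ^ α * ‖𝓕 f ξ‖ ^ 2) := by ring
        _ ≤ (Real.exp 1 + (c * t ^ α) ^ m * Real.exp (c * t ^ α)) * (t ^ α * ‖𝓕 f ξ‖ ^ 2) :=
            mul_le_mul_of_nonneg_right hexp hnn
        _ = Real.exp 1 * (t ^ α * ‖𝓕 f ξ‖ ^ 2) +
              C * ((t ^ α * t ^ (κ - α)) * Real.exp (c * t ^ α) * ‖𝓕 f ξ‖ ^ 2) := by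
            rw [hpow]; ring
        _ = _ := by rw [htκ]
  -- measurability
  have hmeas : AEStronglyMeasurable
      (fun ξ : EuclideanSpace ℝ (Fin 2) =>
        ‖ξ‖ ^ α * Real.exp (c * ‖ξ‖ ^ α) * ‖𝓕 f ξ‖ ^ 2) volume := by
    have hg1 := h1.aestronglyMeasurable
    have : (fun ξ : EuclideanSpace ℝ (Fin 2) =>
        ‖ξ‖ ^ α * Real.exp (c * ‖ξ‖ ^ α) * ‖𝓕 f ξ‖ ^ 2) =
        fun ξ => Real.exp (c * ‖ξ‖ ^ α) * (‖ξ‖ ^ α * ‖𝓕 f ξ‖ ^ 2) := by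
      funext ξ; ring
    rw [this]
    exact (((Real.continuous_exp.comp (continuous_const.mul
      (continuous_norm.rpow_const (fun ξ => Or.inr hα.le)))).aestronglyMeasurable).mul hg1)
  have hint : Integrable (fun ξ : EuclideanSpace ℝ (Fin 2) =>
      ‖ξ‖ ^ α * Real.exp (c * ‖ξ‖ ^ α) * ‖𝓕 f ξ‖ ^ 2) := by
    apply Integrable.mono' ((h1.const_mul (Real.exp 1)).add (h2.const_mul C)) hmeas
    filter_upwards with ξ
    rw [Real.norm_eq_abs, abs_of_nonneg (by positivity)]
    exact key ξ
  refine ⟨hint, ?_⟩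
  calc (∫ ξ : EuclideanSpace ℝ (Fin 2), ‖ξ‖ ^ α * Real.exp (c * ‖ξ‖ ^ α) * ‖𝓕 f ξ‖ ^ 2)
      ≤ ∫ ξ : EuclideanSpace ℝ (Fin 2), (Real.exp 1 * (‖ξ‖ ^ α * ‖𝓕 f ξ‖ ^ 2) +
          C * (‖ξ‖ ^ κ * Real.exp (c * ‖ξ‖ ^ α) * ‖𝓕 f ξ‖ ^ 2)) :=
        integral_mono hint ((h1.const_mul (Real.exp 1)).add (h2.const_mul C)) key
    _ = Real.exp 1 * (∫ ξ : EuclideanSpace ℝ (Fin 2), ‖ξ‖ ^ α * ‖𝓕 f ξ‖ ^ 2) +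
          C * (∫ ξ : EuclideanSpace ℝ (Fin 2),
            ‖ξ‖ ^ κ * Real.exp (c * ‖ξ‖ ^ α) * ‖𝓕 f ξ‖ ^ 2) := by
        rw [integral_add (h1.const_mul _) (h2.const_mul _), integral_const_mul, integral_const_mul]
end

section
/- Let θ₀ : ℝ² → ℂ with θ₀ ∈ Ḣ^{2−κ}, 0 < α < κ ≤ 1, λ > 0, β > 0. Then there is a constant C independent of θ₀ and T such that sup_{0 < s ≤ T} s^{β/κ} ‖e^{λ s^{α/κ}Λ^α} e^{−sΛ^κ} θ₀‖_{Ḣ^{2−κ+β}} ≤ C ‖θ₀‖_{Ḣ^{2−κ}}. -/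
open MeasureTheory FourierTransform Filter

lemma key_bound {α κ lam β : ℝ} (hα : 0 < α) (hακ : α < κ) (hlam : 0 < lam) (hβ : 0 < β) :
    ∃ M : ℝ, 1 ≤ M ∧ ∀ x : ℝ, 0 ≤ x →
      x ^ (2*β) * Real.exp (2*lam*x^α - 2*x^κ) ≤ M := by
  have hκ0 : 0 < κ := hα.trans hακ
  -- eventually, 2λ x^(α-κ) ≤ 1/2
  have h1 : ∀ᶠ x : ℝ in atTop, 2*lam * x ^ (α-κ) ≤ 1/2 := by
    have h := (tendsto_rpow_neg_atTop (y := κ - α) (by linarith)).const_mul (2*lam)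
    rw [mul_zero] at h
    have h2 := h.eventually_lt_const (by norm_num : (0:ℝ) < 1/2)
    filter_upwards [h2] with x hx
    have : -(κ - α) = α - κ := by ring
    rw [this] at hx
    exact hx.le
  -- eventually, log x ≤ (1/(4β)) x^κ
  have h2 : ∀ᶠ x : ℝ in atTop, Real.log x ≤ (1/(4*β)) * x ^ κ := by
    have h := (isLittleO_log_rpow_atTop hκ0).def (by positivity : (0:ℝ) < 1/(4*β))
    filter_upwards [h, eventually_ge_atTop (1:ℝ)] with x hx hx1
    have hl : 0 ≤ Real.log x := Real.log_nonneg hx1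
    have hp : (0:ℝ) ≤ x ^ κ := Real.rpow_nonneg (by linarith) _
    simpa [Real.norm_eq_abs, abs_of_nonneg hl, abs_of_nonneg hp] using hx
  obtain ⟨N, hN⟩ := eventually_atTop.1 (h1.and (h2.and (eventually_ge_atTop (1:ℝ))))
  set N' := max N 1 with hN'
  have hN'1 : (1:ℝ) ≤ N' := le_max_right _ _
  have hN'0 : (0:ℝ) < N' := by linarith
  refine ⟨max 1 (N' ^ (2*β) * Real.exp (2*lam*N'^α)), le_max_left _ _, fun x hx => ?_⟩
  rcases le_or_gt x N' with hle | hgt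
  · refine le_trans ?_ (le_max_right _ _)
    have e1 : x ^ (2*β) ≤ N' ^ (2*β) :=
      Real.rpow_le_rpow hx hle (by positivity)
    have e2 : Real.exp (2*lam*x^α - 2*x^κ) ≤ Real.exp (2*lam*N'^α) := by
      apply Real.exp_le_exp.2
      have : x ^ α ≤ N' ^ α := Real.rpow_le_rpow hx hle hα.le
      have hxκ : (0:ℝ) ≤ x ^ κ := Real.rpow_nonneg hx _
      nlinarith
    have := mul_le_mul e1 e2 (Real.exp_pos _).le (Real.rpow_nonneg hN'0.le _)
    exact this
  · refine le_trans ?_ (le_max_left _ _)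
    have hxN : N ≤ x := le_trans (le_max_left _ _) hgt.le
    obtain ⟨hb1, hb2, hb3⟩ := hN x hxN
    have hx0 : (0:ℝ) < x := by linarith
    rw [Real.rpow_def_of_pos hx0, ← Real.exp_add]
    rw [Real.exp_le_one_iff]
    have hκp : (0:ℝ) ≤ x ^ κ := Real.rpow_nonneg hx _
    -- 2λ x^α ≤ (1/2) x^κ
    have e1 : 2*lam * x ^ α ≤ (1/2) * x ^ κ := by
      have : x ^ α = x ^ (α - κ) * x ^ κ := by
        rw [← Real.rpow_add hx0]; ring_nf
      rw [this]
      calc 2*lam * (x ^ (α-κ) * x ^ κ) = (2*lam * x ^ (α-κ)) * x ^ κ := by ring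
        _ ≤ (1/2) * x ^ κ := mul_le_mul_of_nonneg_right hb1 hκp
    have e2 : Real.log x * (2*β) ≤ (1/2) * x ^ κ := by
      have := mul_le_mul_of_nonneg_right hb2 (by positivity : (0:ℝ) ≤ 2*β)
      calc Real.log x * (2*β) ≤ (1/(4*β)) * x ^ κ * (2*β) := this
        _ = (1/2) * x ^ κ := by field_simp; ring
    linarith

lemma pointwise_bound {α κ lam β : ℝ} (hα : 0 < α) (hακ : α < κ) (hκ : κ ≤ 1)
    (hlam : 0 < lam) (hβ : 0 < β) {M : ℝ}
    (hM : ∀ x : ℝ, 0 ≤ x → x ^ (2*β) * Real.exp (2*lam*x^α - 2*x^κ) ≤ M)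
    {s : ℝ} (hs : 0 < s) (r : ℝ) (hr : 0 ≤ r) :
    r ^ (2 * (2 - κ + β)) * Real.exp (2 * lam * s ^ (α / κ) * r ^ α) *
      Real.exp (-(2 * s * r ^ κ)) ≤ (M * s ^ (-(2*β/κ))) * r ^ (2 * (2 - κ)) := by
  have hκ0 : 0 < κ := hα.trans hακ
  have hx : (0:ℝ) ≤ s ^ (1/κ) * r := by positivity
  have key := hM (s ^ (1/κ) * r) hx
  have es : (0:ℝ) ≤ s ^ (1/κ) := by positivity
  have e1 : (s ^ (1/κ) * r) ^ (2*β) = s ^ (2*β/κ) * r ^ (2*β) := by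
    rw [Real.mul_rpow es hr, ← Real.rpow_mul hs.le]
    congr 1
    · congr 1; field_simp
  have e2 : (s ^ (1/κ) * r) ^ α = s ^ (α/κ) * r ^ α := by
    rw [Real.mul_rpow es hr, ← Real.rpow_mul hs.le]
    congr 2; field_simp
  have e3 : (s ^ (1/κ) * r) ^ κ = s * r ^ κ := by
    rw [Real.mul_rpow es hr, ← Real.rpow_mul hs.le]
    congr 1
    rw [one_div, inv_mul_cancel₀ (ne_of_gt hκ0), Real.rpow_one]
  rw [e1, e2, e3] at key
  -- key : s^(2β/κ) * r^(2β) * exp(2λ s^{α/κ} r^α - 2(s r^κ)) ≤ M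
  have hsp : (0:ℝ) < s ^ (2*β/κ) := Real.rpow_pos_of_pos hs _
  have hrneg : s ^ (-(2*β/κ)) = (s ^ (2*β/κ))⁻¹ := Real.rpow_neg hs.le _
  have split : r ^ (2 * (2 - κ + β)) = r ^ (2 * (2 - κ)) * r ^ (2*β) := by
    rw [show 2 * (2 - κ + β) = 2 * (2 - κ) + 2*β by ring]
    exact Real.rpow_add' hr (by nlinarith)
  rw [split]
  have eexp : Real.exp (2 * lam * s ^ (α / κ) * r ^ α) * Real.exp (-(2 * s * r ^ κ))
      = Real.exp (2 * lam * (s ^ (α/κ) * r ^ α) - 2 * (s * r ^ κ)) := by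
    rw [← Real.exp_add]; ring_nf
  have goal2 : r ^ (2*β) * (Real.exp (2 * lam * s ^ (α / κ) * r ^ α) *
      Real.exp (-(2 * s * r ^ κ))) ≤ M * s ^ (-(2*β/κ)) := by
    rw [eexp, hrneg, mul_comm M _, ← div_eq_inv_mul, le_div_iff₀ hsp]
    calc r ^ (2*β) * Real.exp (2 * lam * (s ^ (α/κ) * r ^ α) - 2 * (s * r ^ κ)) * s ^ (2*β/κ)
        = s ^ (2*β/κ) * r ^ (2*β) * Real.exp (2*lam*(s ^ (α/κ) * r ^ α) - 2*(s * r ^ κ)) := by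
          ring
      _ ≤ M := key
  calc r ^ (2 * (2 - κ)) * r ^ (2*β) * Real.exp (2 * lam * s ^ (α / κ) * r ^ α) *
        Real.exp (-(2 * s * r ^ κ))
      = (r ^ (2*β) * (Real.exp (2 * lam * s ^ (α / κ) * r ^ α) *
          Real.exp (-(2 * s * r ^ κ)))) * r ^ (2 * (2 - κ)) := by ring
    _ ≤ (M * s ^ (-(2*β/κ))) * r ^ (2 * (2 - κ)) :=
        mul_le_mul_of_nonneg_right goal2 (Real.rpow_nonneg hr _)

theorem linear_gevrey_estimate (α κ lam β : ℝ) (hα : 0 < α) (hακ : α < κ)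
    (hκ : κ ≤ 1) (hlam : 0 < lam) (hβ : 0 < β) :
    ∃ C : ℝ, ∀ θ₀ : EuclideanSpace ℝ (Fin 2) → ℂ,
      Integrable (fun ξ : EuclideanSpace ℝ (Fin 2) =>
        ‖ξ‖ ^ (2 * (2 - κ)) * ‖𝓕 θ₀ ξ‖ ^ 2) →
      ∀ T : ℝ, 0 < T → ∀ s : ℝ, 0 < s → s ≤ T →
        s ^ (β / κ) *
          Real.sqrt (∫ ξ : EuclideanSpace ℝ (Fin 2),
            ‖ξ‖ ^ (2 * (2 - κ + β)) *
              Real.exp (2 * lam * s ^ (α / κ) * ‖ξ‖ ^ α) *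
                Real.exp (-(2 * s * ‖ξ‖ ^ κ)) * ‖𝓕 θ₀ ξ‖ ^ 2) ≤
        C * Real.sqrt (∫ ξ : EuclideanSpace ℝ (Fin 2),
            ‖ξ‖ ^ (2 * (2 - κ)) * ‖𝓕 θ₀ ξ‖ ^ 2) := by
  have hκ0 : 0 < κ := hα.trans hακ
  obtain ⟨M, hM1, hM⟩ := key_bound hα hακ hlam hβ
  have hM0 : (0:ℝ) ≤ M := by linarith
  refine ⟨Real.sqrt M, fun θ₀ hG T hT s hs hsT => ?_⟩
  set G : EuclideanSpace ℝ (Fin 2) → ℝ :=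
    fun ξ => ‖ξ‖ ^ (2 * (2 - κ)) * ‖𝓕 θ₀ ξ‖ ^ 2 with hGdef
  set F : EuclideanSpace ℝ (Fin 2) → ℝ :=
    fun ξ => ‖ξ‖ ^ (2 * (2 - κ + β)) * Real.exp (2 * lam * s ^ (α / κ) * ‖ξ‖ ^ α) *
      Real.exp (-(2 * s * ‖ξ‖ ^ κ)) * ‖𝓕 θ₀ ξ‖ ^ 2 with hFdef
  have hpt : ∀ ξ, F ξ ≤ (M * s ^ (-(2*β/κ))) * G ξ := by
    intro ξ
    have h := pointwise_bound hα hακ hκ hlam hβ hM hs ‖ξ‖ (norm_nonneg _)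
    have h2 := mul_le_mul_of_nonneg_right h (by positivity : (0:ℝ) ≤ ‖𝓕 θ₀ ξ‖ ^ 2)
    calc F ξ = ‖ξ‖ ^ (2 * (2 - κ + β)) * Real.exp (2 * lam * s ^ (α / κ) * ‖ξ‖ ^ α) *
          Real.exp (-(2 * s * ‖ξ‖ ^ κ)) * ‖𝓕 θ₀ ξ‖ ^ 2 := rfl
      _ ≤ (M * s ^ (-(2*β/κ))) * ‖ξ‖ ^ (2 * (2 - κ)) * ‖𝓕 θ₀ ξ‖ ^ 2 := h2
      _ = (M * s ^ (-(2*β/κ))) * G ξ := by rw [hGdef]; ring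
  have hint : (∫ ξ, F ξ) ≤ (M * s ^ (-(2*β/κ))) * ∫ ξ, G ξ := by
    calc (∫ ξ, F ξ) ≤ ∫ ξ, (M * s ^ (-(2*β/κ))) * G ξ := by
          apply integral_mono_of_nonneg
          · exact ae_of_all _ fun ξ => by
              simp only [hFdef]; positivity
          · exact hG.const_mul _
          · exact ae_of_all _ hpt
      _ = (M * s ^ (-(2*β/κ))) * ∫ ξ, G ξ := integral_const_mul _ _
  have hc0 : (0:ℝ) ≤ M * s ^ (-(2*β/κ)) := by positivity
  have hsqrt : Real.sqrt (∫ ξ, F ξ) ≤ Real.sqrt M * s ^ (-(β/κ)) * Real.sqrt (∫ ξ, G ξ) := by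
    calc Real.sqrt (∫ ξ, F ξ) ≤ Real.sqrt ((M * s ^ (-(2*β/κ))) * ∫ ξ, G ξ) :=
          Real.sqrt_le_sqrt hint
      _ = Real.sqrt (M * s ^ (-(2*β/κ))) * Real.sqrt (∫ ξ, G ξ) := Real.sqrt_mul hc0 _
      _ = Real.sqrt M * s ^ (-(β/κ)) * Real.sqrt (∫ ξ, G ξ) := by
          rw [Real.sqrt_mul hM0]
          congr 2
          rw [Real.sqrt_eq_rpow, ← Real.rpow_mul hs.le]
          congr 1; ring
  calc s ^ (β / κ) * Real.sqrt (∫ ξ, F ξ)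
      ≤ s ^ (β / κ) * (Real.sqrt M * s ^ (-(β/κ)) * Real.sqrt (∫ ξ, G ξ)) := by
        apply mul_le_mul_of_nonneg_left hsqrt (Real.rpow_nonneg hs.le _)
    _ = Real.sqrt M * ((s ^ (β/κ) * s ^ (-(β/κ))) * Real.sqrt (∫ ξ, G ξ)) := by ring
    _ = Real.sqrt M * Real.sqrt (∫ ξ, G ξ) := by
        rw [← Real.rpow_add hs, add_neg_cancel, Real.rpow_zero, one_mul]
end

section
/- With the assumptions of the previous linear estimate, if moreover θ₀ ∈ Ḣ^{2−κ+β}, then there is a constant C (independent of s, θ₀) with ‖e^{λ s^{α/κ}Λ^α} e^{−sΛ^κ} θ₀‖_{Ḣ^{2−κ+β}} ≤ C ‖θ₀‖_{Ḣ^{2−κ+β}} for all s > 0. -/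
open MeasureTheory FourierTransform

private lemma young_aux {γ c t : ℝ} (hγ0 : 0 < γ) (hγ1 : γ < 1) (hc : 0 < c) (ht : 0 ≤ t) :
    c * t ^ γ - t ≤ c * (c ^ (1 / (1 - γ))) ^ γ := by
  set T := c ^ (1 / (1 - γ)) with hT
  have hT0 : 0 < T := Real.rpow_pos_of_pos hc _
  rcases le_total t T with h | h
  · have h1 : t ^ γ ≤ T ^ γ := Real.rpow_le_rpow ht h hγ0.le
    nlinarith [Real.rpow_nonneg ht γ]
  · have ht0 : 0 < t := lt_of_lt_of_le hT0 h
    have hcT : T ^ (1 - γ) = c := by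
      rw [hT, ← Real.rpow_mul hc.le]
      rw [one_div_mul_cancel (by linarith : (1 : ℝ) - γ ≠ 0), Real.rpow_one]
    have h2 : c ≤ t ^ (1 - γ) := by
      rw [← hcT]; exact Real.rpow_le_rpow hT0.le h (by linarith)
    have h3 : c * t ^ γ ≤ t := by
      calc c * t ^ γ ≤ t ^ (1 - γ) * t ^ γ :=
            mul_le_mul_of_nonneg_right h2 (Real.rpow_nonneg ht0.le γ)
        _ = t := by rw [← Real.rpow_add ht0]; norm_num
    have h4 : 0 ≤ c * T ^ γ := mul_nonneg hc.le (Real.rpow_nonneg hT0.le γ)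
    linarith

private lemma exp_arg_bound (α κ lam : ℝ) (hα : 0 < α) (hακ : α < κ) (hlam : 0 < lam)
    (s r : ℝ) (hs : 0 < s) (hr : 0 ≤ r) :
    2 * lam * s ^ (α / κ) * r ^ α + -(2 * s * r ^ κ) ≤
      2 * (lam * (lam ^ (1 / (1 - α / κ))) ^ (α / κ)) := by
  have hκ0 : 0 < κ := hα.trans hακ
  have hγ0 : 0 < α / κ := div_pos hα hκ0
  have hγ1 : α / κ < 1 := (div_lt_one hκ0).mpr hακ
  have hRHS : 0 ≤ lam * (lam ^ (1 / (1 - α / κ))) ^ (α / κ) :=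
    mul_nonneg hlam.le (Real.rpow_nonneg (Real.rpow_nonneg hlam.le _) _)
  rcases eq_or_lt_of_le hr with h0 | hr0
  · rw [← h0, Real.zero_rpow hα.ne', Real.zero_rpow hκ0.ne']
    simp only [mul_zero, neg_zero, add_zero]; linarith
  · set t := s * r ^ κ with htdef
    have ht0 : 0 < t := mul_pos hs (Real.rpow_pos_of_pos hr0 κ)
    have hkey : s ^ (α / κ) * r ^ α = t ^ (α / κ) := by
      rw [htdef, Real.mul_rpow hs.le (Real.rpow_nonneg hr κ),
        ← Real.rpow_mul hr, mul_div_cancel₀ α hκ0.ne']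
    have := young_aux hγ0 hγ1 hlam ht0.le
    calc 2 * lam * s ^ (α / κ) * r ^ α + -(2 * s * r ^ κ)
        = 2 * (lam * t ^ (α / κ) - t) := by rw [← hkey]; ring
      _ ≤ 2 * (lam * (lam ^ (1 / (1 - α / κ))) ^ (α / κ)) := by linarith

theorem linear_gevrey_estimate_smooth_data (α κ lam β : ℝ) (hα : 0 < α) (hακ : α < κ)
    (hκ : κ ≤ 1) (hlam : 0 < lam) (hβ : 0 < β) :
    ∃ C : ℝ, ∀ θ₀ : EuclideanSpace ℝ (Fin 2) → ℂ,
      Integrable (fun ξ : EuclideanSpace ℝ (Fin 2) =>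
        ‖ξ‖ ^ (2 * (2 - κ + β)) * ‖𝓕 θ₀ ξ‖ ^ 2) →
      ∀ s : ℝ, 0 < s →
        Real.sqrt (∫ ξ : EuclideanSpace ℝ (Fin 2),
            ‖ξ‖ ^ (2 * (2 - κ + β)) *
              Real.exp (2 * lam * s ^ (α / κ) * ‖ξ‖ ^ α) *
                Real.exp (-(2 * s * ‖ξ‖ ^ κ)) * ‖𝓕 θ₀ ξ‖ ^ 2) ≤
        C * Real.sqrt (∫ ξ : EuclideanSpace ℝ (Fin 2),
            ‖ξ‖ ^ (2 * (2 - κ + β)) * ‖𝓕 θ₀ ξ‖ ^ 2) := by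
  set M := Real.exp (2 * (lam * (lam ^ (1 / (1 - α / κ))) ^ (α / κ))) with hM
  refine ⟨Real.sqrt M, fun θ₀ hint s hs => ?_⟩
  have key : ∀ ξ : EuclideanSpace ℝ (Fin 2),
      ‖ξ‖ ^ (2 * (2 - κ + β)) *
          Real.exp (2 * lam * s ^ (α / κ) * ‖ξ‖ ^ α) *
            Real.exp (-(2 * s * ‖ξ‖ ^ κ)) * ‖𝓕 θ₀ ξ‖ ^ 2 ≤
        M * (‖ξ‖ ^ (2 * (2 - κ + β)) * ‖𝓕 θ₀ ξ‖ ^ 2) := by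
    intro ξ
    have hw : (0:ℝ) ≤ ‖ξ‖ ^ (2 * (2 - κ + β)) := Real.rpow_nonneg (norm_nonneg _) _
    have hn : (0:ℝ) ≤ ‖𝓕 θ₀ ξ‖ ^ 2 := sq_nonneg _
    have hE : Real.exp (2 * lam * s ^ (α / κ) * ‖ξ‖ ^ α) *
        Real.exp (-(2 * s * ‖ξ‖ ^ κ)) ≤ M := by
      rw [← Real.exp_add, hM]
      exact Real.exp_le_exp.mpr
        (exp_arg_bound α κ lam hα hακ hlam s ‖ξ‖ hs (norm_nonneg _))
    calc ‖ξ‖ ^ (2 * (2 - κ + β)) * Real.exp (2 * lam * s ^ (α / κ) * ‖ξ‖ ^ α) *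
            Real.exp (-(2 * s * ‖ξ‖ ^ κ)) * ‖𝓕 θ₀ ξ‖ ^ 2
        = (Real.exp (2 * lam * s ^ (α / κ) * ‖ξ‖ ^ α) *
            Real.exp (-(2 * s * ‖ξ‖ ^ κ))) * (‖ξ‖ ^ (2 * (2 - κ + β)) * ‖𝓕 θ₀ ξ‖ ^ 2) := by
          ring
      _ ≤ M * (‖ξ‖ ^ (2 * (2 - κ + β)) * ‖𝓕 θ₀ ξ‖ ^ 2) :=
          mul_le_mul_of_nonneg_right hE (mul_nonneg hw hn)
  have hInt : (∫ ξ : EuclideanSpace ℝ (Fin 2),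
      ‖ξ‖ ^ (2 * (2 - κ + β)) *
        Real.exp (2 * lam * s ^ (α / κ) * ‖ξ‖ ^ α) *
          Real.exp (-(2 * s * ‖ξ‖ ^ κ)) * ‖𝓕 θ₀ ξ‖ ^ 2) ≤
      M * ∫ ξ : EuclideanSpace ℝ (Fin 2),
        ‖ξ‖ ^ (2 * (2 - κ + β)) * ‖𝓕 θ₀ ξ‖ ^ 2 := by
    rw [← integral_const_mul]
    refine integral_mono_of_nonneg (ae_of_all _ fun ξ => ?_) (hint.const_mul M)
      (ae_of_all _ key)
    have hw : (0:ℝ) ≤ ‖ξ‖ ^ (2 * (2 - κ + β)) := Real.rpow_nonneg (norm_nonneg _) _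
    positivity
  calc Real.sqrt (∫ ξ : EuclideanSpace ℝ (Fin 2),
        ‖ξ‖ ^ (2 * (2 - κ + β)) *
          Real.exp (2 * lam * s ^ (α / κ) * ‖ξ‖ ^ α) *
            Real.exp (-(2 * s * ‖ξ‖ ^ κ)) * ‖𝓕 θ₀ ξ‖ ^ 2)
      ≤ Real.sqrt (M * ∫ ξ : EuclideanSpace ℝ (Fin 2),
          ‖ξ‖ ^ (2 * (2 - κ + β)) * ‖𝓕 θ₀ ξ‖ ^ 2) := Real.sqrt_le_sqrt hInt
    _ = Real.sqrt M * Real.sqrt (∫ ξ : EuclideanSpace ℝ (Fin 2),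
          ‖ξ‖ ^ (2 * (2 - κ + β)) * ‖𝓕 θ₀ ξ‖ ^ 2) :=
        Real.sqrt_mul (Real.exp_pos _).le _
end
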